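/- Let G ⊂ ℝⁿ (n ≥ 1) be a convex body. Then there exists a constant C > 1 such that for all nonempty compact convex subsets K, L of G, (1/C)·d_H(K,L)ⁿ ≤ ρ_G(K,L) ≤ C·d_H(K,L). -/

import Mathlib

open MeasureTheory Metric Pointwise

/-- `ρ_G(K,L) := 2·Vol(G + K ∪̃ L) − Vol(G + K) − Vol(G + L)`, where `K ∪̃ L` is the
closed convex hull of `K ∪ L` and `+` is the Minkowski sum. -/
noncomputable def rhoDist {n : ℕ} (G K L : Set (EuclideanSpace ℝ (Fin n))) : ℝ :=
  2 * (volume (G + closure (convexHull ℝ (K ∪ L)))).toReal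
    - (volume (G + K)).toReal - (volume (G + L)).toReal

section Aux

lemma aux_pow_le (n : ℕ) {s s₀ : ℝ} (h0 : 0 ≤ s) (h1 : s ≤ s₀) :
    (1 + s) ^ n ≤ 1 + n * (1 + s₀) ^ n * s := by
  induction n with
  | zero => simp
  | succ m ih =>
    have hB : (1:ℝ) ≤ 1 + s₀ := by linarith
    have hB1 : (1:ℝ) ≤ (1 + s₀) ^ m := one_le_pow₀ hB
    have e1 : (1 + s) ^ m * (1 + s) ≤ (1 + m * (1 + s₀) ^ m * s) * (1 + s) :=
      mul_le_mul_of_nonneg_right ih (by linarith)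
    have hm : (0:ℝ) ≤ (m:ℝ) := Nat.cast_nonneg m
    rw [pow_succ, pow_succ]
    push_cast
    nlinarith [mul_nonneg h0 (sub_nonneg.2 hB1),
      mul_nonneg (mul_nonneg (mul_nonneg hm (by linarith : (0:ℝ) ≤ (1+s₀)^m))
        (sub_nonneg.2 h1)) h0,
      mul_nonneg (mul_nonneg (by linarith : (0:ℝ) ≤ (1+s₀)^m) (by linarith : 0 ≤ s₀)) h0]

variable {n : ℕ}
local notation "E" => EuclideanSpace ℝ (Fin n)
local notation "⟪" x ", " y "⟫" => @inner ℝ _ _ x y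

lemma aux_vol_translate (c : E) (s : Set E) : volume ({c} + s) = volume s := by
  have : {c} + s = (fun y => -c + y) ⁻¹' s := by
    ext y; simp [Set.singleton_add, Set.mem_preimage]
  rw [this, measure_preimage_add]

lemma aux_vol_dilate (c : E) {a : ℝ} (ha : 0 ≤ a) (s : Set E) :
    volume ({c} + a • ({-c} + s)) = ENNReal.ofReal (a ^ n) * volume s := by
  rw [aux_vol_translate, Measure.addHaar_smul_of_nonneg volume ha,
    finrank_euclideanSpace_fin, aux_vol_translate]

lemma aux_dilate_subset {A : Set E} (hA : Convex ℝ A) {c : E} {r d : ℝ} (hr : 0 < r)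
    (hd : 0 ≤ d) (hball : closedBall c r ⊆ A) :
    A + closedBall 0 d ⊆ {c} + (1 + d / r) • ({-c} + A) := by
  rintro y hy
  rw [Set.mem_add] at hy
  obtain ⟨a, ha, b, hb, rfl⟩ := hy
  set l := d / r with hl
  have hl0 : 0 ≤ l := div_nonneg hd hr.le
  have h1l : (1:ℝ) + l ≠ 0 := by positivity
  have hb' : ‖b‖ ≤ d := by simpa [mem_closedBall, dist_eq_norm] using hb
  have hw : c + (1 / (1 + l)) • (a + b - c) ∈ A := by
    rcases eq_or_lt_of_le hd with hd0 | hd0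
    · have hb0 : b = 0 := by
        have : ‖b‖ ≤ 0 := by rw [hd0]; exact hb'
        simpa using le_antisymm this (norm_nonneg b)
      subst hb0
      have hl' : l = 0 := by rw [hl, ← hd0]; simp
      rw [hl']
      simpa using ha
    · have hlpos : 0 < l := div_pos hd0 hr
      have hmem : c + l⁻¹ • b ∈ closedBall c r := by
        rw [mem_closedBall, dist_eq_norm]
        have e0 : c + l⁻¹ • b - c = l⁻¹ • b := by abel
        rw [e0, norm_smul, Real.norm_eq_abs, abs_of_pos (inv_pos.2 hlpos)]
        calc l⁻¹ * ‖b‖ ≤ l⁻¹ * d := by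
              exact mul_le_mul_of_nonneg_left hb' (inv_pos.2 hlpos).le
          _ = r := by rw [hl, inv_div, div_mul_cancel₀ _ hd0.ne']
      have key := hA ha (hball hmem) (by positivity : (0:ℝ) ≤ 1/(1+l))
        (by positivity : (0:ℝ) ≤ l/(1+l)) (by field_simp)
      have heq : c + (1 / (1 + l)) • (a + b - c)
          = (1/(1+l)) • a + (l/(1+l)) • (c + l⁻¹ • b) := by
        match_scalars <;> field_simp <;> ring
      rw [heq]; exact key
  have e : c + (-c + (c + (1 / (1 + l)) • (a + b - c)))
      = c + (1 / (1 + l)) • (a + b - c) := by abel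
  rw [Set.singleton_add, Set.image_add_left, Set.mem_preimage]
  refine Set.mem_smul_set.2 ⟨-c + (c + (1 / (1 + l)) • (a + b - c)), ?_, ?_⟩
  · rw [Set.singleton_add, Set.image_add_left, Set.mem_preimage]
    simp only [neg_neg]
    rw [e]
    exact hw
  · match_scalars <;> field_simp <;> ring

lemma aux_vol_ratio {A : Set E} (hA : Convex ℝ A) (hAcp : IsCompact A) {c : E} {r : ℝ}
    (hr : 0 < r) (hball : closedBall c r ⊆ A) {B : Set E} {d : ℝ} (hd : 0 ≤ d)
    (hB : B ⊆ A + closedBall 0 d) :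
    (volume B).toReal ≤ (1 + d / r) ^ n * (volume A).toReal := by
  have h1 : volume B ≤ ENNReal.ofReal ((1 + d/r) ^ n) * volume A := by
    calc volume B ≤ volume ({c} + (1 + d/r) • ({-c} + A)) :=
          measure_mono (hB.trans (aux_dilate_subset hA hr hd hball))
      _ = _ := aux_vol_dilate c (by positivity) A
  have hfin : ENNReal.ofReal ((1 + d/r) ^ n) * volume A ≠ ⊤ :=
    ENNReal.mul_ne_top ENNReal.ofReal_ne_top hAcp.measure_lt_top.ne
  calc (volume B).toReal ≤ (ENNReal.ofReal ((1 + d/r) ^ n) * volume A).toReal :=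
        ENNReal.toReal_mono hfin h1
    _ = (1 + d / r) ^ n * (volume A).toReal := by
        rw [ENNReal.toReal_mul, ENNReal.toReal_ofReal (by positivity)]

lemma aux_sep {K : Set E} (hKc : IsCompact K) (hKcv : Convex ℝ K) (hne : K.Nonempty)
    {x : E} (hd : 0 < infDist x K) :
    ∃ u : E, ‖u‖ = 1 ∧ ∀ k ∈ K, ⟪u, k⟫ ≤ ⟪u, x⟫ - infDist x K := by
  obtain ⟨y₀, hy₀K, hy₀⟩ := hKc.exists_infDist_eq_dist hne x
  set D := infDist x K with hD
  have hxy : ‖x - y₀‖ = D := by rw [hy₀, ← dist_eq_norm]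
  have hiInf : ‖x - y₀‖ = ⨅ w : K, ‖x - w‖ := by
    rw [hxy, hD, infDist_eq_iInf]
    exact iInf_congr fun w => dist_eq_norm x w
  have obtuse := (norm_eq_iInf_iff_real_inner_le_zero hKcv hy₀K).mp hiInf
  refine ⟨D⁻¹ • (x - y₀), ?_, ?_⟩
  · rw [norm_smul, Real.norm_eq_abs, abs_of_pos (inv_pos.2 hd), hxy,
      inv_mul_cancel₀ hd.ne']
  · intro k hk
    have h1 : ⟪x - y₀, k - y₀⟫ ≤ 0 := obtuse k hk
    have h2 : ⟪x - y₀, x - y₀⟫ = D ^ 2 := by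
      rw [real_inner_self_eq_norm_sq, hxy]
    have h3 : ⟪x - y₀, k⟫ - ⟪x - y₀, y₀⟫ ≤ 0 := by
      rwa [← inner_sub_right]
    have h4 : ⟪x - y₀, x⟫ - ⟪x - y₀, y₀⟫ = D ^ 2 := by
      rw [← inner_sub_right]; exact h2
    rw [real_inner_smul_left, real_inner_smul_left]
    have hD2 : D⁻¹ * D ^ 2 = D := by field_simp
    have h5 := mul_le_mul_of_nonneg_left h3 (inv_pos.2 hd).le
    have h6 : D⁻¹ * (⟪x - y₀, x⟫ - ⟪x - y₀, y₀⟫) = D := by rw [h4]; exact hD2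
    linarith [h5, h6]

lemma aux_haus_attained {K L : Set E} (hK : IsCompact K) (hKne : K.Nonempty)
    (hL : IsCompact L) (hLne : L.Nonempty) :
    (∃ x ∈ K, hausdorffDist K L ≤ infDist x L) ∨
      (∃ x ∈ L, hausdorffDist K L ≤ infDist x K) := by
  obtain ⟨x₁, hx₁K, hx₁⟩ := hK.exists_isMaxOn hKne
    (continuous_infDist_pt L).continuousOn
  obtain ⟨x₂, hx₂L, hx₂⟩ := hL.exists_isMaxOn hLne
    (continuous_infDist_pt K).continuousOn
  have hmax : hausdorffDist K L ≤ max (infDist x₁ L) (infDist x₂ K) := by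
    apply hausdorffDist_le_of_infDist
    · exact le_trans infDist_nonneg (le_max_left _ _)
    · exact fun y hy => le_trans (hx₁ hy) (le_max_left _ _)
    · exact fun y hy => le_trans (hx₂ hy) (le_max_right _ _)
  rcases max_cases (infDist x₁ L) (infDist x₂ K) with ⟨h, -⟩ | ⟨h, -⟩
  · exact Or.inl ⟨x₁, hx₁K, by rwa [h] at hmax⟩
  · exact Or.inr ⟨x₂, hx₂L, by rwa [h] at hmax⟩

lemma aux_rho_comm (G K L : Set E) : rhoDist G K L = rhoDist G L K := by
  unfold rhoDist
  rw [Set.union_comm]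
  ring

lemma aux_M_compact {K L : Set E} (hK : IsCompact K) (hL : IsCompact L) :
    IsCompact (closure (convexHull ℝ (K ∪ L))) := by
  have hb : Bornology.IsBounded (convexHull ℝ (K ∪ L)) :=
    isBounded_convexHull.2 (hK.isBounded.union hL.isBounded)
  exact isCompact_of_isClosed_isBounded isClosed_closure hb.closure

lemma aux_haus_le {K L : Set E} {R : ℝ} (hR : 0 < R)
    (hK : K ⊆ closedBall 0 R) (hL : L ⊆ closedBall 0 R)
    (hKne : K.Nonempty) (hLne : L.Nonempty) :
    hausdorffDist K L ≤ 2 * R := by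
  obtain ⟨k₀, hk₀⟩ := hKne
  obtain ⟨l₀, hl₀⟩ := hLne
  apply hausdorffDist_le_of_infDist (by positivity)
  · intro y hy
    calc infDist y L ≤ dist y l₀ := infDist_le_dist_of_mem hl₀
      _ ≤ ‖y‖ + ‖l₀‖ := by rw [dist_eq_norm]; exact norm_sub_le y l₀
      _ ≤ R + R := add_le_add (mem_closedBall_zero_iff.1 (hK hy))
          (mem_closedBall_zero_iff.1 (hL hl₀))
      _ = 2 * R := by ring
  · intro y hy
    calc infDist y K ≤ dist y k₀ := infDist_le_dist_of_mem hk₀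
      _ ≤ ‖y‖ + ‖k₀‖ := by rw [dist_eq_norm]; exact norm_sub_le y k₀
      _ ≤ R + R := add_le_add (mem_closedBall_zero_iff.1 (hL hy))
          (mem_closedBall_zero_iff.1 (hK hk₀))
      _ = 2 * R := by ring

lemma aux_M_subset {K L : Set E} (hKcp : IsCompact K) (hKcv : Convex ℝ K)
    (hKne : K.Nonempty) (hLcp : IsCompact L) (hLne : L.Nonempty) :
    closure (convexHull ℝ (K ∪ L)) ⊆ K + closedBall 0 (hausdorffDist K L) := by
  set d := hausdorffDist K L with hd
  have hd0 : 0 ≤ d := hausdorffDist_nonneg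
  have hclosed : IsClosed (K + closedBall 0 d) :=
    (hKcp.add (isCompact_closedBall 0 d)).isClosed
  have hconv : Convex ℝ (K + closedBall 0 d) := hKcv.add (convex_closedBall 0 d)
  have hsub : K ∪ L ⊆ K + closedBall 0 d := by
    rintro y (hy | hy)
    · exact ⟨y, hy, 0, by simpa [mem_closedBall] using hd0, by simp⟩
    · obtain ⟨k, hk, hdist⟩ := hKcp.exists_infDist_eq_dist hKne y
      have hfin : EMetric.hausdorffEdist L K ≠ ⊤ :=
        hausdorffEdist_ne_top_of_nonempty_of_bounded hLne hKne
          hLcp.isBounded hKcp.isBounded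
      have h1 : dist y k ≤ d := by
        rw [← hdist, hd, hausdorffDist_comm]
        exact infDist_le_hausdorffDist_of_mem hy hfin
      refine ⟨k, hk, y - k, ?_, by module⟩
      rw [mem_closedBall, dist_zero_right]
      rw [dist_eq_norm] at h1
      exact h1
  exact closure_minimal (convexHull_min hsub hconv) hclosed

lemma aux_ball_in_sum {A : Set E} {z : E} {r : ℝ} (hball : closedBall z r ⊆ A)
    {K : Set E} {k₀ : E} (hk₀ : k₀ ∈ K) : closedBall (z + k₀) r ⊆ A + K := by
  intro y hy
  have h1 : y - k₀ ∈ closedBall z r := by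
    rw [mem_closedBall, dist_eq_norm] at hy ⊢
    have e : y - k₀ - z = y - (z + k₀) := by abel
    rw [e]; exact hy
  have := Set.add_mem_add (hball h1) hk₀
  simpa using this

lemma aux_lower {G K L : Set E} (hn : 1 ≤ n) (hGcv : Convex ℝ G) (hGcp : IsCompact G)
    {z : E} {r R : ℝ} (hr : 0 < r) (hball : closedBall z r ⊆ G) (hR : 0 < R)
    (hGR : G ⊆ closedBall 0 R)
    (hKcp : IsCompact K) (hKcv : Convex ℝ K) (hKne : K.Nonempty) (hKG : K ⊆ G)
    (hLcp : IsCompact L) (hLne : L.Nonempty) (hLG : L ⊆ G)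
    {x : E} (hx : x ∈ L) (hxd : hausdorffDist K L ≤ infDist x K) :
    (r / (2 * (2 * R + r))) ^ n * (volume (ball (0:E) 1)).toReal
      * hausdorffDist K L ^ n ≤ rhoDist G K L := by
  set d := hausdorffDist K L with hdd
  have hd0 : 0 ≤ d := hausdorffDist_nonneg
  set M := closure (convexHull ℝ (K ∪ L)) with hM
  have hMcp : IsCompact (G + M) := hGcp.add (aux_M_compact hKcp hLcp)
  have hMfin : volume (G + M) ≠ ⊤ := hMcp.measure_lt_top.ne
  have hKM : K ⊆ M := (Set.subset_union_left.trans (subset_convexHull ℝ _)).trans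
    subset_closure
  have hLM : L ⊆ M := (Set.subset_union_right.trans (subset_convexHull ℝ _)).trans
    subset_closure
  have hVK : volume (G + K) ≤ volume (G + M) :=
    measure_mono (Set.add_subset_add_left hKM)
  have hVL : volume (G + L) ≤ volume (G + M) :=
    measure_mono (Set.add_subset_add_left hLM)
  have hVKr : (volume (G + K)).toReal ≤ (volume (G + M)).toReal :=
    ENNReal.toReal_mono hMfin hVK
  have hVLr : (volume (G + L)).toReal ≤ (volume (G + M)).toReal :=
    ENNReal.toReal_mono hMfin hVL
  rcases eq_or_lt_of_le hd0 with hd | hdpos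
  · rw [← hd, zero_pow (by omega : n ≠ 0), mul_zero]
    unfold rhoDist
    rw [← hM]
    linarith
  -- Main case : d > 0
  have hD : 0 < infDist x K := lt_of_lt_of_le hdpos hxd
  obtain ⟨u, hu, hsep⟩ := aux_sep hKcp hKcv hKne hD
  have hsep' : ∀ k ∈ K, ⟪u, k⟫ ≤ ⟪u, x⟫ - d := fun k hk =>
    le_trans (hsep k hk) (by linarith [hxd])
  have hzG : z ∈ G := hball (mem_closedBall_self hr.le)
  have hcont : Continuous fun g : E => ⟪u, g⟫ := continuous_const.inner continuous_id
  obtain ⟨p, hpG, hpmax⟩ := hGcp.exists_isMaxOn ⟨z, hzG⟩ hcont.continuousOn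
  set H : ℝ := 2 * R + r with hH
  have hHpos : 0 < H := by positivity
  set t : ℝ := d / (2 * H) with ht
  have htpos : 0 < t := by positivity
  have hd2R : d ≤ 2 * R := aux_haus_le hR (fun y hy => hGR (hKG hy))
    (fun y hy => hGR (hLG hy)) hKne hLne
  have ht1 : t ≤ 1 := by
    rw [ht, div_le_one (by positivity)]
    linarith
  have hzR : ‖z‖ ≤ R := mem_closedBall_zero_iff.1 (hGR hzG)
  have hpR : ‖p‖ ≤ R := mem_closedBall_zero_iff.1 (hGR hpG)
  set A : Set E := G ∩ {g | ⟪u, p⟫ - d < ⟪u, g⟫} with hA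
  set q : E := p + t • (z - p) with hq
  -- the cap contains a ball
  have hcap : closedBall q (t * r) ⊆ A := by
    intro w hw
    set v : E := p + t⁻¹ • (w - p) with hv
    have hvz : v ∈ closedBall z r := by
      rw [mem_closedBall, dist_eq_norm]
      have e : v - z = t⁻¹ • (w - q) := by
        rw [hv, hq]
        match_scalars <;> field_simp <;> ring
      rw [e, norm_smul, Real.norm_eq_abs, abs_of_pos (inv_pos.2 htpos)]
      have hwq : ‖w - q‖ ≤ t * r := by
        rw [← dist_eq_norm]; exact mem_closedBall.1 hw
      calc t⁻¹ * ‖w - q‖ ≤ t⁻¹ * (t * r) :=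
            mul_le_mul_of_nonneg_left hwq (inv_pos.2 htpos).le
        _ = r := by field_simp
    have hw2 : w = p + t • (v - p) := by
      rw [hv]
      match_scalars <;> field_simp <;> ring
    have hwG : w ∈ G := by
      have hwcomb : w = (1 - t) • p + t • v := by
        rw [hw2]; match_scalars <;> ring
      rw [hwcomb]
      exact hGcv hpG (hball hvz) (by linarith) htpos.le (by ring)
    refine ⟨hwG, ?_⟩
    have hinner : ⟪u, w⟫ = ⟪u, p⟫ + t * ⟪u, v - p⟫ := by
      rw [hw2, inner_add_right, real_inner_smul_right]
    have hvp : ‖v - p‖ ≤ H := by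
      have e : v - p = (v - z) + (z - p) := by abel
      calc ‖v - p‖ = ‖(v - z) + (z - p)‖ := by rw [e]
        _ ≤ ‖v - z‖ + ‖z - p‖ := norm_add_le _ _
        _ ≤ r + (‖z‖ + ‖p‖) := add_le_add
            (by rw [← dist_eq_norm]; exact mem_closedBall.1 hvz) (norm_sub_le z p)
        _ ≤ r + (R + R) := by gcongr
        _ = H := by rw [hH]; ring
    have hCS : -(H) ≤ ⟪u, v - p⟫ := by
      have h1 : |⟪u, v - p⟫| ≤ ‖u‖ * ‖v - p‖ := abs_real_inner_le_norm u (v - p)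
      rw [hu, one_mul] at h1
      have h2 := abs_le.1 (h1.trans hvp)
      linarith [h2.1]
    have htH : t * H = d / 2 := by
      rw [ht]; field_simp
    have : ⟪u, p⟫ - d < ⟪u, w⟫ := by
      rw [hinner]
      have h2 : t * ⟪u, v - p⟫ ≥ -(t * H) := by nlinarith
      rw [htH] at h2
      linarith
    exact this
  -- disjointness of x + A and G + K
  have hdisj : Disjoint ({x} + A) (G + K) := by
    rw [Set.disjoint_left]
    rintro y hy1 hy2
    rw [Set.mem_add] at hy1 hy2
    obtain ⟨x', hx', a, ha, hya⟩ := hy1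
    obtain ⟨g, hg, k, hk, hgk⟩ := hy2
    rw [Set.mem_singleton_iff] at hx'
    rw [hx'] at hya
    have e1 : ⟪u, y⟫ = ⟪u, x⟫ + ⟪u, a⟫ := by rw [← hya]; exact inner_add_right _ _ _
    have e2 : ⟪u, y⟫ = ⟪u, g⟫ + ⟪u, k⟫ := by rw [← hgk]; exact inner_add_right _ _ _
    have h1 : ⟪u, p⟫ - d < ⟪u, a⟫ := ha.2
    have h2 : ⟪u, g⟫ ≤ ⟪u, p⟫ := hpmax hg
    have h3 : ⟪u, k⟫ ≤ ⟪u, x⟫ - d := hsep' k hk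
    linarith [e1, e2]
  -- x + A ⊆ G + M
  have hxA : {x} + A ⊆ G + M := by
    rintro y hy
    rw [Set.mem_add] at hy
    obtain ⟨x', hx', a, ha, hya⟩ := hy
    rw [Set.mem_singleton_iff] at hx'
    rw [hx'] at hya
    have h0 : a + x ∈ G + M := Set.add_mem_add ha.1 (hLM hx)
    rw [← hya, add_comm x a]
    exact h0
  -- volume estimate
  have hGKmeas : MeasurableSet (G + K) := (hGcp.add hKcp).isClosed.measurableSet
  have hunion : ({x} + A) ∪ (G + K) ⊆ G + M :=
    Set.union_subset hxA (Set.add_subset_add_left hKM)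
  have hvol1 : volume ({x} + A) + volume (G + K) ≤ volume (G + M) := by
    rw [← measure_union hdisj hGKmeas]
    exact measure_mono hunion
  have hvolA : ENNReal.ofReal ((t * r) ^ n) * volume (ball (0:E) 1)
      ≤ volume ({x} + A) := by
    rw [aux_vol_translate]
    calc ENNReal.ofReal ((t * r) ^ n) * volume (ball (0:E) 1)
        = volume (closedBall q (t * r)) := by
          rw [Measure.addHaar_closedBall volume q (by positivity),
            finrank_euclideanSpace_fin]
      _ ≤ volume A := measure_mono hcap
  have hvol2 : ENNReal.ofReal ((t * r) ^ n) * volume (ball (0:E) 1)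
      + volume (G + K) ≤ volume (G + M) :=
    le_trans (add_le_add hvolA le_rfl) hvol1
  have hballfin : volume (ball (0:E) 1) ≠ ⊤ := measure_ball_lt_top.ne
  have hGKfin : volume (G + K) ≠ ⊤ := (hGcp.add hKcp).measure_lt_top.ne
  have hterm : (ENNReal.ofReal ((t * r) ^ n) * volume (ball (0:E) 1)).toReal
      = (t * r) ^ n * (volume (ball (0:E) 1)).toReal := by
    rw [ENNReal.toReal_mul, ENNReal.toReal_ofReal (by positivity)]
  have hvol3 : (t * r) ^ n * (volume (ball (0:E) 1)).toReal
      + (volume (G + K)).toReal ≤ (volume (G + M)).toReal := by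
    have := ENNReal.toReal_mono hMfin hvol2
    rwa [ENNReal.toReal_add (ENNReal.mul_ne_top ENNReal.ofReal_ne_top hballfin)
      hGKfin, hterm] at this
  have hgoal : (r / (2 * H)) ^ n * (volume (ball (0:E) 1)).toReal * d ^ n
      = (t * r) ^ n * (volume (ball (0:E) 1)).toReal := by
    have e : t * r = r / (2 * H) * d := by rw [ht]; ring
    rw [e, mul_pow]
    ring
  unfold rhoDist
  rw [← hM]
  rw [hH] at hgoal
  rw [hgoal]
  linarith

lemma aux_upper {G K L : Set E} (hGcv : Convex ℝ G) (hGcp : IsCompact G)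
    {z : E} {r R : ℝ} (hr : 0 < r) (hball : closedBall z r ⊆ G) (hR : 0 < R)
    (hGR : G ⊆ closedBall 0 R)
    (hKcp : IsCompact K) (hKcv : Convex ℝ K) (hKne : K.Nonempty) (hKG : K ⊆ G)
    (hLcp : IsCompact L) (hLcv : Convex ℝ L) (hLne : L.Nonempty) (hLG : L ⊆ G) :
    rhoDist G K L ≤ (2 * n * (1 + 2 * R / r) ^ n / r
      * (volume (closedBall (0:E) (2 * R))).toReal) * hausdorffDist K L := by
  set d := hausdorffDist K L with hdd
  have hd0 : 0 ≤ d := hausdorffDist_nonneg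
  have hd2R : d ≤ 2 * R := aux_haus_le hR (fun y hy => hGR (hKG hy))
    (fun y hy => hGR (hLG hy)) hKne hLne
  set M := closure (convexHull ℝ (K ∪ L)) with hM
  set V2R := (volume (closedBall (0:E) (2 * R))).toReal with hV2R
  have hsub2R : ∀ (S : Set E), S ⊆ G → G + S ⊆ closedBall 0 (2 * R) := by
    intro S hS y hy
    rw [Set.mem_add] at hy
    obtain ⟨g, hg, s, hs, rfl⟩ := hy
    rw [mem_closedBall_zero_iff]
    calc ‖g + s‖ ≤ ‖g‖ + ‖s‖ := norm_add_le _ _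
      _ ≤ R + R := add_le_add (mem_closedBall_zero_iff.1 (hGR hg))
          (mem_closedBall_zero_iff.1 (hGR (hS hs)))
      _ = 2 * R := by ring
  have hV2Rfin : volume (closedBall (0:E) (2 * R)) ≠ ⊤ :=
    (isCompact_closedBall _ _).measure_lt_top.ne
  -- generic bracket estimate
  have bracket : ∀ (S : Set E), IsCompact S → Convex ℝ S → S.Nonempty → S ⊆ G →
      M ⊆ S + closedBall 0 d →
      (volume (G + M)).toReal - (volume (G + S)).toReal
        ≤ n * (1 + 2 * R / r) ^ n / r * V2R * d := by
    intro S hScp hScv hSne hSG hMS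
    obtain ⟨s₀, hs₀⟩ := hSne
    have hGScv : Convex ℝ (G + S) := hGcv.add hScv
    have hGScp : IsCompact (G + S) := hGcp.add hScp
    have hballGS : closedBall (z + s₀) r ⊆ G + S := aux_ball_in_sum hball hs₀
    have hGM : G + M ⊆ (G + S) + closedBall 0 d := by
      calc G + M ⊆ G + (S + closedBall 0 d) := Set.add_subset_add_left hMS
        _ = (G + S) + closedBall 0 d := by rw [add_assoc]
    have h1 : (volume (G + M)).toReal ≤ (1 + d / r) ^ n * (volume (G + S)).toReal :=
      aux_vol_ratio hGScv hGScp hr hballGS hd0 hGM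
    have h2 : (1 + d / r) ^ n ≤ 1 + n * (1 + 2 * R / r) ^ n * (d / r) :=
      aux_pow_le n (by positivity) (by gcongr)
    have hVS0 : 0 ≤ (volume (G + S)).toReal := ENNReal.toReal_nonneg
    have hVSle : (volume (G + S)).toReal ≤ V2R := by
      rw [hV2R]
      exact ENNReal.toReal_mono hV2Rfin (measure_mono (hsub2R S hSG))
    have h3 : (volume (G + M)).toReal - (volume (G + S)).toReal
        ≤ n * (1 + 2 * R / r) ^ n * (d / r) * (volume (G + S)).toReal := by
      nlinarith
    calc (volume (G + M)).toReal - (volume (G + S)).toReal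
        ≤ n * (1 + 2 * R / r) ^ n * (d / r) * (volume (G + S)).toReal := h3
      _ ≤ n * (1 + 2 * R / r) ^ n * (d / r) * V2R := by
          apply mul_le_mul_of_nonneg_left hVSle (by positivity)
      _ = n * (1 + 2 * R / r) ^ n / r * V2R * d := by ring
  have hbK := bracket K hKcp hKcv hKne hKG (aux_M_subset hKcp hKcv hKne hLcp hLne)
  have hML : M ⊆ L + closedBall 0 d := by
    have := aux_M_subset hLcp hLcv hLne hKcp hKne
    rw [Set.union_comm, hausdorffDist_comm] at this
    exact this
  have hbL := bracket L hLcp hLcv hLne hLG hML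
  have e : 2 * ↑n * (1 + 2 * R / r) ^ n / r * V2R * d
      = (↑n * (1 + 2 * R / r) ^ n / r * V2R * d)
        + (↑n * (1 + 2 * R / r) ^ n / r * V2R * d) := by ring
  unfold rhoDist
  rw [← hM]
  linarith [hbK, hbL, e]

end Aux

theorem stmt0 {n : ℕ} (hn : 1 ≤ n) (G : Set (EuclideanSpace ℝ (Fin n)))
    (hGcv : Convex ℝ G) (hGcp : IsCompact G) (hGint : (interior G).Nonempty) :
    ∃ C : ℝ, 1 < C ∧ ∀ K L : Set (EuclideanSpace ℝ (Fin n)),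
      K.Nonempty → IsCompact K → Convex ℝ K → K ⊆ G →
      L.Nonempty → IsCompact L → Convex ℝ L → L ⊆ G →
      (1 / C) * hausdorffDist K L ^ n ≤ rhoDist G K L ∧
        rhoDist G K L ≤ C * hausdorffDist K L := by
  obtain ⟨z, hz⟩ := hGint
  obtain ⟨ε, hε, hball0⟩ := Metric.isOpen_iff.1 isOpen_interior z hz
  set r := ε / 2 with hrdef
  have hr : 0 < r := by positivity
  have hball : closedBall z r ⊆ G := by
    refine le_trans (le_trans ?_ (show ball z ε ≤ interior G from hball0)) interior_subset
    exact closedBall_subset_ball (by rw [hrdef]; linarith)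
  obtain ⟨R, hR, hGR⟩ := hGcp.isBounded.subset_closedBall_lt 0 0
  set ω := (volume (ball (0:EuclideanSpace ℝ (Fin n)) 1)).toReal with hω
  have hωpos : 0 < ω := by
    rw [hω]
    exact ENNReal.toReal_pos (measure_ball_pos _ _ one_pos).ne' measure_ball_lt_top.ne
  set V2R := (volume (closedBall (0:EuclideanSpace ℝ (Fin n)) (2 * R))).toReal
    with hV2R
  have hV2R0 : 0 ≤ V2R := ENNReal.toReal_nonneg
  set c₁ : ℝ := (r / (2 * (2 * R + r))) ^ n * ω with hc₁
  have hc₁pos : 0 < c₁ := by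
    rw [hc₁]; exact mul_pos (pow_pos (by positivity) n) hωpos
  set C₂ : ℝ := 2 * n * (1 + 2 * R / r) ^ n / r * V2R with hC₂
  have hC₂0 : 0 ≤ C₂ := by
    rw [hC₂]; exact mul_nonneg (by positivity) hV2R0
  refine ⟨max (max (1 / c₁) C₂) 2, lt_of_lt_of_le one_lt_two (le_max_right _ _),
    fun K L hKne hKcp hKcv hKG hLne hLcp hLcv hLG => ?_⟩
  set C := max (max (1 / c₁) C₂) 2 with hC
  have hCpos : 0 < C := lt_of_lt_of_le two_pos (le_max_right _ _)
  have hinv : 1 / C ≤ c₁ := by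
    have h1 : 1 / c₁ ≤ C := le_trans (le_max_left _ _) (le_max_left _ _)
    have h2 : 0 < 1 / c₁ := one_div_pos.2 hc₁pos
    calc 1 / C ≤ 1 / (1 / c₁) := one_div_le_one_div_of_le h2 h1
      _ = c₁ := one_div_one_div c₁
  constructor
  · -- lower bound
    have hlow : c₁ * hausdorffDist K L ^ n ≤ rhoDist G K L := by
      rcases aux_haus_attained hKcp hKne hLcp hLne with ⟨x, hxK, hxd⟩ | ⟨x, hxL, hxd⟩
      · have h := aux_lower hn hGcv hGcp hr hball hR hGR hLcp hLcv hLne hLG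
          hKcp hKne hKG hxK (by rwa [hausdorffDist_comm] at hxd)
        rw [← aux_rho_comm G K L, hausdorffDist_comm (s := L) (t := K)] at h
        rw [hc₁, hω]
        exact h
      · have h := aux_lower hn hGcv hGcp hr hball hR hGR hKcp hKcv hKne hKG
          hLcp hLne hLG hxL hxd
        rw [hc₁, hω]
        exact h
    calc 1 / C * hausdorffDist K L ^ n ≤ c₁ * hausdorffDist K L ^ n :=
          mul_le_mul_of_nonneg_right hinv (pow_nonneg hausdorffDist_nonneg n)
      _ ≤ rhoDist G K L := hlow
  · -- upper bound
    have hup := aux_upper hGcv hGcp hr hball hR hGR hKcp hKcv hKne hKG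
      hLcp hLcv hLne hLG
    calc rhoDist G K L ≤ C₂ * hausdorffDist K L := by rw [hC₂]; exact hup
      _ ≤ C * hausdorffDist K L := mul_le_mul_of_nonneg_right
          (le_trans (le_max_right _ _) (le_max_left _ _)) hausdorffDist_nonneg
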